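/- Let d ≥ 1 and suppose nonnegative reals σ²_u are given for each nonempty subset u of {1,…,d}, with σ²_∅ = 0, and let val(u) = Σ_{v ⊆ u} σ²_v. Then the Shapley value φ_j of player j satisfies val({j}) ≤ φ_j ≤ Σ_{u : u ∩ {j} ≠ ∅} σ²_u; that is, the Shapley value of variable j is bracketed between the lower Sobol' index τ̲²_{{j}} = σ²_{{j}} and the upper Sobol' index τ̄²_{{j}} = Σ_{u ∋ j} σ²_u. -/
import Mathlib


open Finset

/-- The Shapley value of player `j` for the cooperative game `val` on subsets of `Fin d`. -/
noncomputable def shapley {d : ℕ} (val : Finset (Fin d) → ℝ) (j : Fin d) : ℝ :=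
  (d : ℝ)⁻¹ * ∑ u ∈ (Finset.univ.erase j).powerset,
    ((Nat.choose (d - 1) u.card : ℝ))⁻¹ * (val (insert j u) - val u)

/-- For the variance-explained game `val u = ∑_{v ⊆ u} σ2 v` built from nonnegative
ANOVA variance components, the Shapley value of player `j` is bracketed between the
lower Sobol' index `val {j}` and the upper Sobol' index `∑_{u ∩ {j} ≠ ∅} σ2 u`. -/
theorem shapley_between_sobol_indices (d : ℕ) (hd : 1 ≤ d) (σ2 : Finset (Fin d) → ℝ)
    (hσ : ∀ u, 0 ≤ σ2 u) (h0 : σ2 ∅ = 0) (j : Fin d) :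
    (∑ v ∈ ({j} : Finset (Fin d)).powerset, σ2 v)
        ≤ shapley (fun u => ∑ v ∈ u.powerset, σ2 v) j ∧
      shapley (fun u => ∑ v ∈ u.powerset, σ2 v) j
        ≤ ∑ u ∈ Finset.univ.powerset.filter (fun u => u ∩ {j} ≠ ∅), σ2 u := by
  classical
  have hdR : (0:ℝ) < d := by exact_mod_cast hd
  have hcardE : (Finset.univ.erase j).card = d - 1 := by
    rw [Finset.card_erase_of_mem (Finset.mem_univ j), Finset.card_univ, Fintype.card_fin]
  have hjnot : ∀ u ∈ (Finset.univ.erase j).powerset, j ∉ u := by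
    intro u hu hju
    exact (Finset.mem_erase.1 (Finset.mem_powerset.1 hu hju)).1 rfl
  -- the marginal contribution of j to u is the sum of σ2 over sets insert j w, w ⊆ u
  have hdiff : ∀ u ∈ (Finset.univ.erase j).powerset,
      (∑ v ∈ (insert j u).powerset, σ2 v) - ∑ v ∈ u.powerset, σ2 v
        = ∑ w ∈ u.powerset, σ2 (insert j w) := by
    intro u hu
    have hj := hjnot u hu
    have hdisj : Disjoint u.powerset (u.powerset.image (insert j)) := by
      rw [Finset.disjoint_left]
      intro v hv hv'
      obtain ⟨w, hw, rfl⟩ := Finset.mem_image.1 hv'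
      exact hj (Finset.mem_powerset.1 hv (Finset.mem_insert_self j w))
    have hinj : ∀ x ∈ u.powerset, ∀ y ∈ u.powerset,
        insert j x = insert j y → x = y := by
      intro x hx y hy hxy
      have hjx : j ∉ x := fun h => hj (Finset.mem_powerset.1 hx h)
      have hjy : j ∉ y := fun h => hj (Finset.mem_powerset.1 hy h)
      have := congrArg (fun s => Finset.erase s j) hxy
      simpa [Finset.erase_insert hjx, Finset.erase_insert hjy] using this
    rw [Finset.powerset_insert, Finset.sum_union hdisj, Finset.sum_image hinj]
    ring
  -- sum of inverse binomial coefficients over the powerset is d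
  have hchoose : ∀ u ∈ (Finset.univ.erase j).powerset,
      ((Nat.choose (d - 1) u.card : ℝ)) ≠ 0 := by
    intro u hu
    have : u.card ≤ d - 1 := by
      rw [← hcardE]; exact Finset.card_le_card (Finset.mem_powerset.1 hu)
    have := Nat.choose_pos this
    positivity
  have hsum : ∑ u ∈ (Finset.univ.erase j).powerset,
      ((Nat.choose (d - 1) u.card : ℝ))⁻¹ = d := by
    rw [Finset.sum_powerset_apply_card (fun k => ((Nat.choose (d-1) k : ℝ))⁻¹), hcardE]
    have : ∀ m ∈ Finset.range (d - 1 + 1),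
        ((d-1).choose m) • ((Nat.choose (d - 1) m : ℝ))⁻¹ = 1 := by
      intro m hm
      have hm' : m ≤ d - 1 := Nat.lt_succ_iff.1 (Finset.mem_range.1 hm)
      have hpos := Nat.choose_pos hm'
      rw [nsmul_eq_mul]
      field_simp
    rw [Finset.sum_congr rfl this, Finset.sum_const, Finset.card_range,
      Nat.sub_add_cancel hd, nsmul_eq_mul, mul_one]
  set S : ℝ := ∑ w ∈ (Finset.univ.erase j).powerset, σ2 (insert j w) with hS
  have key : shapley (fun u => ∑ v ∈ u.powerset, σ2 v) j
      = (d : ℝ)⁻¹ * ∑ u ∈ (Finset.univ.erase j).powerset,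
          ((Nat.choose (d - 1) u.card : ℝ))⁻¹ * ∑ w ∈ u.powerset, σ2 (insert j w) := by
    unfold shapley
    congr 1
    exact Finset.sum_congr rfl fun u hu => by rw [hdiff u hu]
  constructor
  · -- lower bound
    have hL : (∑ v ∈ ({j} : Finset (Fin d)).powerset, σ2 v) = σ2 {j} := by
      have hps : ({j} : Finset (Fin d)).powerset = {∅, {j}} := by
        ext v
        simp [Finset.subset_singleton_iff]
      rw [hps, Finset.sum_insert (by simp [Ne.symm (Finset.singleton_ne_empty j)]),
        Finset.sum_singleton, h0, zero_add]
    rw [key, hL]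
    have hterm : ∀ u ∈ (Finset.univ.erase j).powerset,
        ((Nat.choose (d - 1) u.card : ℝ))⁻¹ * σ2 {j}
          ≤ ((Nat.choose (d - 1) u.card : ℝ))⁻¹ * ∑ w ∈ u.powerset, σ2 (insert j w) := by
      intro u hu
      have h1 : σ2 {j} ≤ ∑ w ∈ u.powerset, σ2 (insert j w) := by
        have hemp : (∅ : Finset (Fin d)) ∈ u.powerset := by simp
        have := Finset.single_le_sum (f := fun w => σ2 (insert j w))
          (fun w _ => hσ _) hemp
        simpa using this
      have hc : (0:ℝ) ≤ ((Nat.choose (d - 1) u.card : ℝ))⁻¹ := by positivity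
      exact mul_le_mul_of_nonneg_left h1 hc
    calc σ2 {j} = (d : ℝ)⁻¹ * ∑ u ∈ (Finset.univ.erase j).powerset,
          ((Nat.choose (d - 1) u.card : ℝ))⁻¹ * σ2 {j} := by
          rw [← Finset.sum_mul, hsum]
          field_simp
      _ ≤ _ := by
          apply mul_le_mul_of_nonneg_left (Finset.sum_le_sum hterm)
          positivity
  · -- upper bound
    have hR : (∑ u ∈ Finset.univ.powerset.filter (fun u => u ∩ {j} ≠ ∅), σ2 u) = S := by
      rw [hS]
      have himg : Finset.univ.powerset.filter (fun u => u ∩ {j} ≠ ∅)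
          = (Finset.univ.erase j).powerset.image (insert j) := by
        ext v
        simp only [Finset.mem_filter, Finset.mem_powerset, Finset.mem_image]
        constructor
        · rintro ⟨-, hne⟩
          have hjv : j ∈ v := by
            by_contra hjv
            exact hne (by rw [Finset.inter_singleton_of_notMem hjv])
          exact ⟨v.erase j, Finset.erase_subset_erase j (Finset.subset_univ v),
            Finset.insert_erase hjv⟩
        · rintro ⟨w, hw, rfl⟩
          refine ⟨Finset.subset_univ _, ?_⟩
          rw [Finset.inter_singleton_of_mem (Finset.mem_insert_self j w)]
          simp
      rw [himg]
      refine Finset.sum_image ?_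
      intro x hx y hy hxy
      have hjx : j ∉ x := hjnot x hx
      have hjy : j ∉ y := hjnot y hy
      have := congrArg (fun s => Finset.erase s j) hxy
      simpa [Finset.erase_insert hjx, Finset.erase_insert hjy] using this
    rw [key, hR]
    have hterm : ∀ u ∈ (Finset.univ.erase j).powerset,
        ((Nat.choose (d - 1) u.card : ℝ))⁻¹ * ∑ w ∈ u.powerset, σ2 (insert j w)
          ≤ ((Nat.choose (d - 1) u.card : ℝ))⁻¹ * S := by
      intro u hu
      have h1 : (∑ w ∈ u.powerset, σ2 (insert j w)) ≤ S := by
        rw [hS]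
        refine Finset.sum_le_sum_of_subset_of_nonneg
          (Finset.powerset_mono.2 (Finset.mem_powerset.1 hu)) fun w _ _ => hσ _
      have hc : (0:ℝ) ≤ ((Nat.choose (d - 1) u.card : ℝ))⁻¹ := by positivity
      exact mul_le_mul_of_nonneg_left h1 hc
    calc (d : ℝ)⁻¹ * ∑ u ∈ (Finset.univ.erase j).powerset,
          ((Nat.choose (d - 1) u.card : ℝ))⁻¹ * ∑ w ∈ u.powerset, σ2 (insert j w)
        ≤ (d : ℝ)⁻¹ * ∑ u ∈ (Finset.univ.erase j).powerset,
            ((Nat.choose (d - 1) u.card : ℝ))⁻¹ * S := by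
          apply mul_le_mul_of_nonneg_left (Finset.sum_le_sum hterm)
          positivity
      _ = S := by
          rw [← Finset.sum_mul, hsum]
          field_simp
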